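/- For all integers a, b ≥ 0, every k ≥ 1 and every n ≥ k + a + b, there is no permutation of length n with exactly k inversions that avoids both of the patterns id_a ⊕ 21 and 21 ⊕ id_b; that is, av_n^k({id_a ⊕ 21, 21 ⊕ id_b}) = 0. -/

import Mathlib

/-- A permutation `π` of length `n` (as a bijection of `Fin n`, position `i` has value `π i`)
contains the pattern `p` of length `m` if some subsequence of `π` is order-isomorphic to `p`. -/
def Contains {n m : ℕ} (π : Equiv.Perm (Fin n)) (p : Equiv.Perm (Fin m)) : Prop :=
  ∃ f : Fin m → Fin n, StrictMono f ∧ ∀ a b : Fin m, π (f a) < π (f b) ↔ p a < p b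

/-- `π` avoids the pattern `p`. -/
def Avoids {n m : ℕ} (π : Equiv.Perm (Fin n)) (p : Equiv.Perm (Fin m)) : Prop :=
  ¬ Contains π p

/-- The number of inversions of `π`: pairs of positions `i < j` with `π i > π j`. -/
noncomputable def invCount {n : ℕ} (π : Equiv.Perm (Fin n)) : ℕ :=
  Nat.card {ij : Fin n × Fin n // ij.1 < ij.2 ∧ π ij.2 < π ij.1}

/-- The pattern `id_a ⊕ 21` of length `a + 2`: in one-line notation
`1 2 … a (a+2) (a+1)`, i.e. the transposition of the two largest values. -/
def idOplus21 (a : ℕ) : Equiv.Perm (Fin (a + 2)) :=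
  Equiv.swap ⟨a, by omega⟩ ⟨a + 1, by omega⟩

/-- The pattern `21 ⊕ id_b` of length `b + 2`: in one-line notation
`2 1 3 4 … (b+2)`, i.e. the transposition of the two smallest values. -/
def p21OplusId (b : ℕ) : Equiv.Perm (Fin (b + 2)) :=
  Equiv.swap ⟨0, by omega⟩ ⟨1, by omega⟩

open Finset

def invIn {n : ℕ} (π : Equiv.Perm (Fin n)) (S : Finset (Fin n)) : ℕ :=
  ((S ×ˢ S).filter fun p => p.1 < p.2 ∧ π p.2 < π p.1).card

lemma invIn_mono {n : ℕ} (π : Equiv.Perm (Fin n)) {S T : Finset (Fin n)} (h : S ⊆ T) :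
    invIn π S ≤ invIn π T := by
  apply Finset.card_le_card
  apply Finset.filter_subset_filter
  exact Finset.product_subset_product h h

/-- If every increasing chain in `S` has size at most `c`, then `S` has at least
`|S| - c` inversions. -/
lemma es_lemma0 {n : ℕ} (π : Equiv.Perm (Fin n)) :
    ∀ (m : ℕ) (S : Finset (Fin n)) (c : ℕ), S.card ≤ m →
    (∀ T ⊆ S, (∀ s ∈ T, ∀ t ∈ T, s < t → π s < π t) → T.card ≤ c) →
    S.card ≤ invIn π S + c := by
  intro m
  induction m with
  | zero => intro S c hS _; omega
  | succ m ih =>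
    intro S c hS hchain
    rcases S.eq_empty_or_nonempty with rfl | hne
    · simp
    · set t := S.max' hne with ht
      have htS : t ∈ S := S.max'_mem hne
      set S' := S.erase t with hS'
      have hcard : S'.card + 1 = S.card := Finset.card_erase_add_one htS
      have hsub : S' ⊆ S := Finset.erase_subset _ _
      by_cases hinv : ∃ s ∈ S', π t < π s
      · -- t forms an inversion with some s ∈ S'
        obtain ⟨s, hsS', hst⟩ := hinv
        have hsS : s ∈ S := hsub hsS'
        have hslt : s < t := lt_of_le_of_ne (S.le_max' s hsS) (Finset.ne_of_mem_erase hsS')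
        have h1 : invIn π S' + 1 ≤ invIn π S := by
          have : insert (s, t) ((S' ×ˢ S').filter fun p => p.1 < p.2 ∧ π p.2 < π p.1)
              ⊆ (S ×ˢ S).filter fun p => p.1 < p.2 ∧ π p.2 < π p.1 := by
            intro p hp
            rcases Finset.mem_insert.mp hp with rfl | hp
            · simp [hsS, htS, hslt, hst]
            · simp only [Finset.mem_filter, Finset.mem_product] at hp ⊢
              exact ⟨⟨hsub hp.1.1, hsub hp.1.2⟩, hp.2⟩
          have hcard2 := Finset.card_le_card this
          rwa [Finset.card_insert_of_notMem (by
            simp only [Finset.mem_filter, Finset.mem_product, not_and]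
            intro h _; exact absurd h.2 (Finset.notMem_erase t S))] at hcard2
        have := ih S' c (by omega) (fun T hT hc => hchain T (hT.trans hsub) hc)
        omega
      · -- no inversion: all of S' has values below π t, chains of S' extend by t
        push_neg at hinv
        rcases Nat.eq_zero_or_pos c with rfl | hc
        · exfalso
          have := hchain {t} (by simpa using htS) (by intro s hs u hu h; simp at hs hu; omega)
          simp at this
        have hchain' : ∀ T ⊆ S', (∀ s ∈ T, ∀ u ∈ T, s < u → π s < π u) → T.card ≤ c - 1 := by
          intro T hT hc'
          have htT : t ∉ T := fun h => Finset.notMem_erase t S (hT h)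
          have : (insert t T).card ≤ c := by
            apply hchain _ (Finset.insert_subset htS (hT.trans hsub))
            intro s hs u hu hsu
            rcases Finset.mem_insert.mp hs with rfl | hs <;>
              rcases Finset.mem_insert.mp hu with rfl | hu
            · exact absurd hsu (lt_irrefl t)
            · exfalso
              have : u ≤ t := S.le_max' u (hsub (hT hu))
              exact absurd hsu (not_lt.mpr this)
            · have hsv := hinv s (hT hs)
              have hne2 : π s ≠ π t := fun h => htT (π.injective h ▸ hs)
              exact lt_of_le_of_ne hsv hne2
            · exact hc' s hs u hu hsu
          rw [Finset.card_insert_of_notMem htT] at this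
          omega
        have := ih S' (c - 1) (by omega) hchain'
        have := invIn_mono π hsub
        omega

lemma es_lemma {n : ℕ} (π : Equiv.Perm (Fin n)) (S : Finset (Fin n)) (c : ℕ)
    (h : ∀ T ⊆ S, (∀ s ∈ T, ∀ t ∈ T, s < t → π s < π t) → T.card ≤ c) :
    S.card ≤ invIn π S + c :=
  es_lemma0 π S.card S c le_rfl h

lemma no_descent_mono {n : ℕ} (π : Equiv.Perm (Fin n))
    (h : ∀ m (hm : m + 1 < n), π ⟨m, by omega⟩ < π ⟨m + 1, hm⟩) :
    ∀ i j : Fin n, i < j → π i < π j := by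
  have key : ∀ d (iv : ℕ) (hd : iv + d + 1 < n), π ⟨iv, by omega⟩ < π ⟨iv + d + 1, hd⟩ := by
    intro d
    induction d with
    | zero => intro iv hd; exact h iv hd
    | succ d ih =>
      intro iv hd
      have h1 := ih iv (by omega)
      have h2 := h (iv + d + 1) (by omega)
      calc π ⟨iv, by omega⟩ < π ⟨iv + d + 1, by omega⟩ := h1
        _ < π ⟨iv + d + 2, by omega⟩ := by
            convert h2 using 3 <;> omega
  intro i j hij
  have hij' : (i : ℕ) < (j : ℕ) := hij
  have : j.val = i.val + (j.val - i.val - 1) + 1 := by omega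
  have e2 : j = ⟨i.val + (j.val - i.val - 1) + 1, by omega⟩ := by
    rw [Fin.ext_iff]; simp; omega
  have e1 : i = ⟨i.val, i.isLt⟩ := by simp
  rw [e1, e2]
  exact key (j.val - i.val - 1) i.val (by omega)

lemma containsL {n a : ℕ} (π : Equiv.Perm (Fin n)) (i j : Fin n) (hij : i < j)
    (hji : π j < π i) (T : Finset (Fin n)) (hTsub : ∀ t ∈ T, t < i ∧ π t < π j)
    (hchain : ∀ s ∈ T, ∀ t ∈ T, s < t → π s < π t) (hcard : T.card = a) :
    Contains π (idOplus21 a) := by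
  set g := T.orderIsoOfFin hcard with hg
  have hgmem : ∀ z : Fin a, (g z : Fin n) ∈ T := fun z => (g z).2
  have hgpos : ∀ z : Fin a, (g z : Fin n) < i := fun z => (hTsub _ (hgmem z)).1
  have hgvalj : ∀ z : Fin a, π (g z) < π j := fun z => (hTsub _ (hgmem z)).2
  have hgvali : ∀ z : Fin a, π (g z) < π i := fun z => (hgvalj z).trans hji
  have hgmono : StrictMono (fun z : Fin a => (g z : Fin n)) := fun z w h =>
    Subtype.coe_lt_coe.mpr (g.lt_iff_lt.mpr h)
  have hgval : StrictMono (fun z : Fin a => π (g z : Fin n)) := fun z w h =>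
    hchain _ (hgmem z) _ (hgmem w) (hgmono h)
  have Pval : ∀ x : Fin (a+2), ((idOplus21 a) x).val
      = if x.val = a then a+1 else if x.val = a+1 then a else x.val := by
    intro x
    simp only [idOplus21, Equiv.swap_apply_def]
    split_ifs <;> simp_all [Fin.ext_iff] <;> omega
  refine ⟨fun x => if h : x.val < a then (g ⟨x.val, h⟩ : Fin n) else if x.val = a then i else j,
    ?_, ?_⟩
  · intro x y hxy
    have hxy' : x.val < y.val := hxy
    dsimp only
    by_cases hx : x.val < a <;> by_cases hy : y.val < a
    · rw [dif_pos hx, dif_pos hy]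
      exact hgmono (show (⟨x.val, hx⟩ : Fin a) < ⟨y.val, hy⟩ from hxy')
    · rw [dif_pos hx, dif_neg hy]
      split_ifs
      · exact hgpos _
      · exact (hgpos _).trans hij
    · omega
    · rw [dif_neg hx, dif_neg hy, if_pos (show x.val = a by omega),
        if_neg (show ¬ y.val = a by omega)]
      exact hij
  · intro x y
    conv_rhs => rw [Fin.lt_def]
    rw [Pval x, Pval y]
    dsimp only
    by_cases hx : x.val < a <;> by_cases hy : y.val < a
    · rw [dif_pos hx, dif_pos hy, if_neg (by omega), if_neg (by omega), if_neg (by omega),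
        if_neg (by omega)]
      rw [hgval.lt_iff_lt]
      exact Iff.rfl
    · rw [dif_pos hx, dif_neg hy, if_neg (show ¬ x.val = a by omega),
        if_neg (show ¬ x.val = a + 1 by omega)]
      by_cases hy1 : y.val = a
      · rw [if_pos hy1, if_pos hy1]
        exact iff_of_true (hgvali _) (by omega)
      · rw [if_neg hy1, if_neg hy1, if_pos (show y.val = a + 1 by omega)]
        exact iff_of_true (hgvalj _) (by omega)
    · rw [dif_neg hx, dif_pos hy, if_neg (show ¬ y.val = a by omega),
        if_neg (show ¬ y.val = a + 1 by omega)]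
      by_cases hx1 : x.val = a
      · rw [if_pos hx1, if_pos hx1]
        exact iff_of_false (not_lt.mpr (hgvali _).le) (by omega)
      · rw [if_neg hx1, if_neg hx1, if_pos (show x.val = a + 1 by omega)]
        exact iff_of_false (not_lt.mpr (hgvalj _).le) (by omega)
    · rw [dif_neg hx, dif_neg hy]
      by_cases hx1 : x.val = a <;> by_cases hy1 : y.val = a
      · rw [if_pos hx1, if_pos hy1, if_pos hx1, if_pos hy1]
        exact iff_of_false (lt_irrefl _) (by omega)
      · rw [if_pos hx1, if_neg hy1, if_pos hx1, if_neg hy1,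
          if_pos (show y.val = a + 1 by omega)]
        exact iff_of_false (not_lt.mpr hji.le) (by omega)
      · rw [if_neg hx1, if_pos hy1, if_neg hx1, if_pos hy1,
          if_pos (show x.val = a + 1 by omega)]
        exact iff_of_true hji (by omega)
      · rw [if_neg hx1, if_neg hy1, if_neg hx1, if_neg hy1,
          if_pos (show x.val = a + 1 by omega), if_pos (show y.val = a + 1 by omega)]
        exact iff_of_false (lt_irrefl _) (by omega)

lemma containsR {n b : ℕ} (π : Equiv.Perm (Fin n)) (i j : Fin n) (hij : i < j)
    (hji : π j < π i) (T : Finset (Fin n)) (hTsub : ∀ t ∈ T, j < t ∧ π i < π t)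
    (hchain : ∀ s ∈ T, ∀ t ∈ T, s < t → π s < π t) (hcard : T.card = b) :
    Contains π (p21OplusId b) := by
  set g := T.orderIsoOfFin hcard with hg
  have hgmem : ∀ z : Fin b, (g z : Fin n) ∈ T := fun z => (g z).2
  have hgpos : ∀ z : Fin b, j < (g z : Fin n) := fun z => (hTsub _ (hgmem z)).1
  have hgvali : ∀ z : Fin b, π i < π (g z) := fun z => (hTsub _ (hgmem z)).2
  have hgvalj : ∀ z : Fin b, π j < π (g z) := fun z => hji.trans (hgvali z)
  have hgmono : StrictMono (fun z : Fin b => (g z : Fin n)) := fun z w h =>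
    Subtype.coe_lt_coe.mpr (g.lt_iff_lt.mpr h)
  have hgval : StrictMono (fun z : Fin b => π (g z : Fin n)) := fun z w h =>
    hchain _ (hgmem z) _ (hgmem w) (hgmono h)
  have Pval : ∀ x : Fin (b+2), ((p21OplusId b) x).val
      = if x.val = 0 then 1 else if x.val = 1 then 0 else x.val := by
    intro x
    simp only [p21OplusId, Equiv.swap_apply_def]
    split_ifs <;> simp only [Fin.ext_iff] at * <;> omega
  refine ⟨fun x => if h : x.val < 2 then (if x.val = 0 then i else j)
      else (g ⟨x.val - 2, by omega⟩ : Fin n), ?_, ?_⟩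
  · intro x y hxy
    have hxy' : x.val < y.val := hxy
    dsimp only
    by_cases hx : x.val < 2 <;> by_cases hy : y.val < 2
    · rw [dif_pos hx, dif_pos hy, if_pos (show x.val = 0 by omega),
        if_neg (show ¬ y.val = 0 by omega)]
      exact hij
    · rw [dif_pos hx, dif_neg hy]
      split_ifs
      · exact hij.trans (hgpos _)
      · exact hgpos _
    · omega
    · rw [dif_neg hx, dif_neg hy]
      exact hgmono (show (⟨x.val - 2, by omega⟩ : Fin b) < ⟨y.val - 2, by omega⟩ by
        simp only [Fin.mk_lt_mk]; omega)
  · intro x y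
    conv_rhs => rw [Fin.lt_def]
    rw [Pval x, Pval y]
    dsimp only
    by_cases hx : x.val < 2 <;> by_cases hy : y.val < 2
    · by_cases hx1 : x.val = 0 <;> by_cases hy1 : y.val = 0
      · rw [dif_pos hx, dif_pos hy, if_pos hx1, if_pos hy1, if_pos hx1, if_pos hy1]
        exact iff_of_false (lt_irrefl _) (by omega)
      · rw [dif_pos hx, dif_pos hy, if_pos hx1, if_neg hy1, if_pos hx1, if_neg hy1,
          if_pos (show y.val = 1 by omega)]
        exact iff_of_false (not_lt.mpr hji.le) (by omega)
      · rw [dif_pos hx, dif_pos hy, if_neg hx1, if_pos hy1, if_neg hx1, if_pos hy1,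
          if_pos (show x.val = 1 by omega)]
        exact iff_of_true hji (by omega)
      · rw [dif_pos hx, dif_pos hy, if_neg hx1, if_neg hy1, if_neg hx1, if_neg hy1,
          if_pos (show x.val = 1 by omega), if_pos (show y.val = 1 by omega)]
        exact iff_of_false (lt_irrefl _) (by omega)
    · rw [dif_pos hx, dif_neg hy, if_neg (show ¬ y.val = 0 by omega),
        if_neg (show ¬ y.val = 1 by omega)]
      by_cases hx1 : x.val = 0
      · rw [if_pos hx1, if_pos hx1]
        exact iff_of_true (hgvali _) (by omega)
      · rw [if_neg hx1, if_neg hx1, if_pos (show x.val = 1 by omega)]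
        exact iff_of_true (hgvalj _) (by omega)
    · rw [dif_neg hx, dif_pos hy, if_neg (show ¬ x.val = 0 by omega),
        if_neg (show ¬ x.val = 1 by omega)]
      by_cases hy1 : y.val = 0
      · rw [if_pos hy1, if_pos hy1]
        exact iff_of_false (not_lt.mpr (hgvali _).le) (by omega)
      · rw [if_neg hy1, if_neg hy1, if_pos (show y.val = 1 by omega)]
        exact iff_of_false (not_lt.mpr (hgvalj _).le) (by omega)
    · rw [dif_neg hx, dif_neg hy, if_neg (show ¬ x.val = 0 by omega),
        if_neg (show ¬ x.val = 1 by omega), if_neg (show ¬ y.val = 0 by omega),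
        if_neg (show ¬ y.val = 1 by omega)]
      rw [hgval.lt_iff_lt]
      simp only [Fin.mk_lt_mk]
      omega

/-- For all `a, b ≥ 0`, every `k ≥ 1` and every `n ≥ k + a + b`, no permutation of
length `n` with exactly `k` inversions avoids both `id_a ⊕ 21` and `21 ⊕ id_b`. -/
theorem av_idOplus21_p21OplusId_eq_zero (a b k n : ℕ) (hk : 1 ≤ k) (hn : k + a + b ≤ n) :
    Nat.card {π : Equiv.Perm (Fin n) // invCount π = k ∧
      Avoids π (idOplus21 a) ∧ Avoids π (p21OplusId b)} = 0 := by
  rw [Nat.card_eq_zero]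
  left
  rw [isEmpty_subtype]
  rintro π ⟨hinv, hA, hB⟩
  -- the inversion set as a finset
  set Inv : Finset (Fin n × Fin n) :=
    univ.filter (fun ij : Fin n × Fin n => ij.1 < ij.2 ∧ π ij.2 < π ij.1) with hInv
  have hInvCard : Inv.card = k := by
    rw [← hinv, invCount, Nat.card_eq_fintype_card, Fintype.card_subtype]
  -- there is an adjacent descent
  obtain ⟨iv, hiv, hdesc⟩ : ∃ iv : ℕ, ∃ hiv : iv + 1 < n, π ⟨iv + 1, hiv⟩ < π ⟨iv, by omega⟩ := by
    by_contra hcon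
    push_neg at hcon
    have hmono : ∀ i j : Fin n, i < j → π i < π j := by
      apply no_descent_mono
      intro m hm
      have h1 := hcon m hm
      have h2 : π ⟨m, by omega⟩ ≠ π ⟨m+1, hm⟩ := by
        intro h; have := π.injective h; simp [Fin.ext_iff] at this
      exact lt_of_le_of_ne h1 h2
    have : Inv = ∅ := by
      rw [Finset.eq_empty_iff_forall_notMem]
      rintro ⟨x, y⟩ hxy
      simp only [hInv, Finset.mem_filter] at hxy
      exact absurd (hmono x y hxy.2.1) (not_lt.mpr (le_of_lt hxy.2.2))
    rw [this] at hInvCard; simp at hInvCard; omega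
  set i : Fin n := ⟨iv, by omega⟩ with hi
  set j : Fin n := ⟨iv + 1, hiv⟩ with hj
  have hji : π j < π i := hdesc
  have hij : i < j := by simp [hi, hj, Fin.lt_def]
  -- the four regions
  set Llow := univ.filter (fun t : Fin n => t < i ∧ π t < π j) with hLlow
  set Lhigh := univ.filter (fun t : Fin n => t < i ∧ π j < π t) with hLhigh
  set Rlow := univ.filter (fun t : Fin n => j < t ∧ π t < π i) with hRlow
  set Rhigh := univ.filter (fun t : Fin n => j < t ∧ π i < π t) with hRhigh
  -- cardinality: the four regions and {i, j} partition everything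
  have hpart : Llow.card + Lhigh.card + Rlow.card + Rhigh.card + 2 = n := by
    have hdL : Disjoint Llow Lhigh := by
      rw [Finset.disjoint_left]
      intro t h1 h2
      simp only [hLlow, hLhigh, Finset.mem_filter] at h1 h2
      exact absurd (h1.2.2.trans h2.2.2) (lt_irrefl _)
    have hUL : Llow ∪ Lhigh = Finset.Iio i := by
      ext t
      simp only [hLlow, hLhigh, Finset.mem_union, Finset.mem_filter, Finset.mem_univ,
        true_and, Finset.mem_Iio]
      constructor
      · rintro (⟨h, _⟩ | ⟨h, _⟩) <;> exact h
      · intro h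
        have hne : π t ≠ π j := fun he => (ne_of_lt (h.trans hij)) (π.injective he)
        rcases lt_or_gt_of_ne hne with hv | hv
        · exact Or.inl ⟨h, hv⟩
        · exact Or.inr ⟨h, hv⟩
    have hdR : Disjoint Rlow Rhigh := by
      rw [Finset.disjoint_left]
      intro t h1 h2
      simp only [hRlow, hRhigh, Finset.mem_filter] at h1 h2
      exact absurd (h1.2.2.trans h2.2.2) (lt_irrefl _)
    have hUR : Rlow ∪ Rhigh = Finset.Ioi j := by
      ext t
      simp only [hRlow, hRhigh, Finset.mem_union, Finset.mem_filter, Finset.mem_univ,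
        true_and, Finset.mem_Ioi]
      constructor
      · rintro (⟨h, _⟩ | ⟨h, _⟩) <;> exact h
      · intro h
        have hne : π t ≠ π i := fun he => (ne_of_gt (hij.trans h)) (π.injective he)
        rcases lt_or_gt_of_ne hne with hv | hv
        · exact Or.inl ⟨h, hv⟩
        · exact Or.inr ⟨h, hv⟩
    have c1 : Llow.card + Lhigh.card = iv := by
      rw [← Finset.card_union_of_disjoint hdL, hUL, Fin.card_Iio]
    have c2 : Rlow.card + Rhigh.card = n - 1 - (iv + 1) := by
      rw [← Finset.card_union_of_disjoint hdR, hUR, Fin.card_Ioi]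
    omega
  -- a ≠ 0 (else π contains 21 = idOplus21 0 via (i,j))
  have ha : 1 ≤ a := by
    by_contra h
    exact hA (containsL π i j hij hji ∅ (by simp) (by simp) (by simp; omega))
  have hb : 1 ≤ b := by
    by_contra h
    exact hB (containsR π i j hij hji ∅ (by simp) (by simp) (by simp; omega))
  -- chain bounds from pattern avoidance
  have hchainL : ∀ T ⊆ Llow, (∀ s ∈ T, ∀ t ∈ T, s < t → π s < π t) → T.card ≤ a - 1 := by
    intro T hT hc
    by_contra hlarge
    push_neg at hlarge
    obtain ⟨T', hT', hT'card⟩ := Finset.exists_subset_card_eq (s := T) (n := a) (by omega)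
    refine hA (containsL π i j hij hji T' ?_ ?_ hT'card)
    · intro t ht
      have := hT (hT' ht)
      simp only [hLlow, Finset.mem_filter] at this
      exact this.2
    · exact fun s hs t ht h => hc s (hT' hs) t (hT' ht) h
  have hchainR : ∀ T ⊆ Rhigh, (∀ s ∈ T, ∀ t ∈ T, s < t → π s < π t) → T.card ≤ b - 1 := by
    intro T hT hc
    by_contra hlarge
    push_neg at hlarge
    obtain ⟨T', hT', hT'card⟩ := Finset.exists_subset_card_eq (s := T) (n := b) (by omega)
    refine hB (containsR π i j hij hji T' ?_ ?_ hT'card)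
    · intro t ht
      have := hT (hT' ht)
      simp only [hRhigh, Finset.mem_filter] at this
      exact this.2
    · exact fun s hs t ht h => hc s (hT' hs) t (hT' ht) h
  have hesL := es_lemma π Llow (a-1) hchainL
  have hesR := es_lemma π Rhigh (b-1) hchainR
  -- disjoint subfamilies of Inv
  have hcount : Lhigh.card + Rlow.card + invIn π Llow + invIn π Rhigh + 1 ≤ k := by
    classical
    set A := Lhigh.image (fun t => (t, j)) with hAdef
    set B := Rlow.image (fun t => (i, t)) with hBdef
    set C := (Llow ×ˢ Llow).filter (fun p : Fin n × Fin n => p.1 < p.2 ∧ π p.2 < π p.1)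
      with hCdef
    set D := (Rhigh ×ˢ Rhigh).filter (fun p : Fin n × Fin n => p.1 < p.2 ∧ π p.2 < π p.1)
      with hDdef
    set E : Finset (Fin n × Fin n) := {(i, j)} with hEdef
    have hAmem : ∀ p ∈ A, p.1 < i ∧ p.2 = j ∧ p.1 < p.2 ∧ π p.2 < π p.1 := by
      intro p hp
      simp only [hAdef, Finset.mem_image, hLhigh, Finset.mem_filter, Finset.mem_univ,
        true_and] at hp
      obtain ⟨t, ⟨hti, htv⟩, rfl⟩ := hp
      exact ⟨hti, rfl, hti.trans hij, htv⟩
    have hBmem : ∀ p ∈ B, p.1 = i ∧ j < p.2 ∧ p.1 < p.2 ∧ π p.2 < π p.1 := by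
      intro p hp
      simp only [hBdef, Finset.mem_image, hRlow, Finset.mem_filter, Finset.mem_univ,
        true_and] at hp
      obtain ⟨t, ⟨hti, htv⟩, rfl⟩ := hp
      exact ⟨rfl, hti, hij.trans hti, htv⟩
    have hCmem : ∀ p ∈ C, p.1 < i ∧ p.2 < i ∧ p.1 < p.2 ∧ π p.2 < π p.1 := by
      intro p hp
      simp only [hCdef, Finset.mem_filter, Finset.mem_product, hLlow, Finset.mem_univ,
        true_and] at hp
      exact ⟨hp.1.1.1, hp.1.2.1, hp.2⟩
    have hDmem : ∀ p ∈ D, j < p.1 ∧ j < p.2 ∧ p.1 < p.2 ∧ π p.2 < π p.1 := by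
      intro p hp
      simp only [hDdef, Finset.mem_filter, Finset.mem_product, hRhigh, Finset.mem_univ,
        true_and] at hp
      exact ⟨hp.1.1.1, hp.1.2.1, hp.2⟩
    have hsub : A ∪ B ∪ C ∪ D ∪ E ⊆ Inv := by
      intro p hp
      rw [hInv, Finset.mem_filter]
      refine ⟨Finset.mem_univ _, ?_⟩
      simp only [Finset.mem_union] at hp
      rcases hp with ((((hp | hp) | hp) | hp) | hp)
      · exact (hAmem p hp).2.2
      · exact (hBmem p hp).2.2
      · exact (hCmem p hp).2.2
      · exact (hDmem p hp).2.2
      · simp only [hEdef, Finset.mem_singleton] at hp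
        subst hp
        exact ⟨hij, hji⟩
    have d1 : Disjoint A B := by
      rw [Finset.disjoint_left]
      intro p hp hp'
      have h1 := (hAmem p hp).1
      have h2 := (hBmem p hp').1
      rw [h2] at h1
      exact absurd h1 (lt_irrefl _)
    have d2 : Disjoint (A ∪ B) C := by
      rw [Finset.disjoint_left]
      intro p hp hp'
      have hC2 := (hCmem p hp').2.1
      rcases Finset.mem_union.mp hp with hp | hp
      · have h1 := (hAmem p hp).2.1
        rw [h1] at hC2
        exact absurd (hij.trans hC2) (lt_irrefl _)
      · have h1 := (hBmem p hp).1
        have hC1 := (hCmem p hp').1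
        rw [h1] at hC1
        exact absurd hC1 (lt_irrefl _)
    have d3 : Disjoint (A ∪ B ∪ C) D := by
      rw [Finset.disjoint_left]
      intro p hp hp'
      have hD1 := (hDmem p hp').1
      rcases Finset.mem_union.mp hp with hp | hp
      · rcases Finset.mem_union.mp hp with hp | hp
        · have h1 := (hAmem p hp).1
          exact absurd ((hij.trans hD1).trans h1) (lt_irrefl _)
        · have h1 := (hBmem p hp).1
          rw [h1] at hD1
          exact absurd (hij.trans hD1) (lt_irrefl _)
      · have h1 := (hCmem p hp).1
        exact absurd ((hij.trans hD1).trans h1) (lt_irrefl _)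
    have d4 : Disjoint (A ∪ B ∪ C ∪ D) E := by
      rw [Finset.disjoint_left]
      intro p hp hp'
      simp only [hEdef, Finset.mem_singleton] at hp'
      subst hp'
      rcases Finset.mem_union.mp hp with hp | hp
      · rcases Finset.mem_union.mp hp with hp | hp
        · rcases Finset.mem_union.mp hp with hp | hp
          · exact absurd (hAmem _ hp).1 (lt_irrefl _)
          · exact absurd (hBmem _ hp).2.1 (lt_irrefl _)
        · exact absurd (hij.trans (hCmem _ hp).2.1) (lt_irrefl _)
      · exact absurd (hij.trans (hDmem _ hp).1) (lt_irrefl _)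
    have hAcard : A.card = Lhigh.card := by
      rw [hAdef]
      exact Finset.card_image_of_injective _ (fun x y h => by
        simpa using congrArg Prod.fst h)
    have hBcard : B.card = Rlow.card := by
      rw [hBdef]
      exact Finset.card_image_of_injective _ (fun x y h => by
        simpa using congrArg Prod.snd h)
    have hCcard : C.card = invIn π Llow := rfl
    have hDcard : D.card = invIn π Rhigh := rfl
    have hle := Finset.card_le_card hsub
    rw [hInvCard] at hle
    rw [Finset.card_union_of_disjoint d4, Finset.card_union_of_disjoint d3,
      Finset.card_union_of_disjoint d2, Finset.card_union_of_disjoint d1] at hle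
    simp only [hEdef, Finset.card_singleton] at hle
    omega
  omega
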